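/- arXiv:1802.01920 — 6 statements merged into one kernel-verified Lean document; each statement's English description precedes it below -/
import Mathlib

section
/- Let d = (d_1,...,d_n) be positive integers, F ∈ K[x]^{m×n} with the j-th column of degree < d_j, and P ∈ K[x]^{m×m}. Then P is a basis of the module A_d(F) = {p ∈ K[x]^{1×m} | pF ≡ 0 mod diag(x^{d_1},...,x^{d_n})} if and only if there exists Q ∈ K[x]^{m×n} such that the block matrix [P Q] ∈ K[x]^{m×(m+n)} is a kernel basis for the (m+n)×n matrix whose top block is F and bottom block is −diag(x^{d_1},...,x^{d_n}). -/
open Polynomial Matrix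

noncomputable section

def approxModule {m n : ℕ} {K : Type*} [Field K] (d : Fin n → ℕ)
    (F : Matrix (Fin m) (Fin n) K[X]) : Submodule K[X] (Fin m → K[X]) where
  carrier := {p | ∀ j, (X : K[X]) ^ d j ∣ Matrix.vecMul p F j}
  zero_mem' := by intro j; simp [Matrix.zero_vecMul]
  add_mem' := by
    intro a b ha hb j
    rw [Matrix.add_vecMul, Pi.add_apply]
    exact dvd_add (ha j) (hb j)
  smul_mem' := by
    intro c p hp j
    rw [Matrix.smul_vecMul, Pi.smul_apply, smul_eq_mul]
    exact (hp j).mul_left c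

def rowsBasis {κ ι : Type*} {K : Type*} [Field K] (B : Matrix κ ι K[X])
    (N : Submodule K[X] (ι → K[X])) : Prop :=
  LinearIndependent K[X] (fun i => B i) ∧
    Submodule.span K[X] (Set.range fun i => B i) = N

lemma mem_ker_iff_aux {K : Type*} [Field K] {m n : ℕ} (d : Fin n → ℕ)
    (F : Matrix (Fin m) (Fin n) K[X]) (p : Fin m → K[X]) (q : Fin n → K[X]) :
    Sum.elim p q ∈ LinearMap.ker (Matrix.vecMulLinear
      (Matrix.fromRows F (-(Matrix.diagonal fun j => (X : K[X]) ^ d j)))) ↔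
    ∀ j, Matrix.vecMul p F j = q j * X ^ d j := by
  rw [LinearMap.mem_ker, Matrix.vecMulLinear_apply, Matrix.sumElim_vecMul_fromRows,
    Matrix.vecMul_neg, funext_iff]
  refine forall_congr' fun j => ?_
  simp [Matrix.vecMul_diagonal, add_neg_eq_zero]

lemma sum_smul_elim {K : Type*} [Field K] {m n : ℕ} (c : Fin m → K[X])
    (P : Matrix (Fin m) (Fin m) K[X]) (Q : Matrix (Fin m) (Fin n) K[X]) :
    (∑ i, c i • Sum.elim (P i) (Q i)) =
      Sum.elim (∑ i, c i • P i) (∑ i, c i • Q i) := by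
  funext j
  cases j <;> simp [Finset.sum_apply]

/-- `P` is a basis of the approximant module `A_d(F)` iff `[P Q]` is a kernel basis of
`[F ; −diag(x^{d_j})]` for some `Q`. -/
theorem approx_basis_iff_kernel_basis
    {K : Type*} [Field K] {m n : ℕ} (d : Fin n → ℕ) (hd : ∀ j, 0 < d j)
    (F : Matrix (Fin m) (Fin n) K[X])
    (hF : ∀ i j, (F i j).degree < (d j : ℕ∞))
    (P : Matrix (Fin m) (Fin m) K[X]) :
    rowsBasis P (approxModule d F) ↔
      ∃ Q : Matrix (Fin m) (Fin n) K[X],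
        rowsBasis (Matrix.fromCols P Q)
          (LinearMap.ker (Matrix.vecMulLinear
            (Matrix.fromRows F (-(Matrix.diagonal fun j => (X : K[X]) ^ d j))))) := by
  classical
  have hX : ∀ j, (X : K[X]) ^ d j ≠ 0 := fun j => pow_ne_zero _ X_ne_zero
  constructor
  · rintro ⟨hLI, hspan⟩
    have hmem : ∀ i, P i ∈ approxModule d F := fun i =>
      hspan ▸ Submodule.subset_span (Set.mem_range_self i)
    choose Q hQ using fun i j => (hmem i j)
    have hrow : ∀ i, (Matrix.fromCols P Q) i = Sum.elim (P i) (Q i) := by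
      intro i; funext j; cases j <;> rfl
    have hker : ∀ i, (Matrix.fromCols P Q) i ∈
        LinearMap.ker (Matrix.vecMulLinear
          (Matrix.fromRows F (-(Matrix.diagonal fun j => (X : K[X]) ^ d j)))) := by
      intro i
      rw [hrow i, mem_ker_iff_aux]
      intro j
      rw [hQ i j, mul_comm]
    refine ⟨Q, ?_, ?_⟩
    · refine LinearIndependent.of_comp (LinearMap.funLeft K[X] K[X] Sum.inl) ?_
      have he : (LinearMap.funLeft K[X] K[X] Sum.inl) ∘ (fun i => (Matrix.fromCols P Q) i)
          = fun i => P i := by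
        funext i
        funext j
        simp [LinearMap.funLeft_apply, hrow]
      rw [he]
      exact hLI
    · apply le_antisymm
      · rw [Submodule.span_le]
        rintro _ ⟨i, rfl⟩
        exact hker i
      · intro v hv
        set p : Fin m → K[X] := v ∘ Sum.inl with hp'
        set q : Fin n → K[X] := v ∘ Sum.inr with hq'
        have hv' : Sum.elim p q = v := by funext j; cases j <;> rfl
        have hpq : ∀ j, Matrix.vecMul p F j = q j * X ^ d j :=
          (mem_ker_iff_aux d F p q).mp (hv' ▸ hv)
        have hpmem : p ∈ approxModule d F := fun j => ⟨q j, by rw [hpq j, mul_comm]⟩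
        rw [← hspan] at hpmem
        obtain ⟨c, hc⟩ := (Submodule.mem_span_range_iff_exists_fun K[X]).mp hpmem
        refine (Submodule.mem_span_range_iff_exists_fun K[X]).mpr ⟨c, ?_⟩
        have key : ∀ j, Matrix.vecMul p F j = ∑ i, c i * Matrix.vecMul (P i) F j := by
          intro j
          calc Matrix.vecMul p F j = Matrix.vecMulLinear F p j := rfl
            _ = Matrix.vecMulLinear F (∑ i, c i • P i) j := by rw [hc]
            _ = ∑ i, c i * Matrix.vecMul (P i) F j := by
                rw [map_sum]
                simp [Finset.sum_apply, Matrix.vecMulLinear_apply]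
        rw [← hv']
        simp only [hrow]
        refine (sum_smul_elim c P Q).trans ?_
        funext j
        cases j with
        | inl j => exact congrFun hc j
        | inr j =>
          simp only [Sum.elim_inr]
          have hmul : (∑ i, c i • Q i) j * X ^ d j = q j * X ^ d j := by
            rw [Finset.sum_apply, Finset.sum_mul, ← hpq j, key j]
            refine Finset.sum_congr rfl fun i _ => ?_
            rw [hQ i j]
            simp only [Pi.smul_apply, smul_eq_mul]
            ring
          exact mul_right_cancel₀ (hX j) hmul
  · rintro ⟨Q, hLI, hspan⟩
    have hrow : ∀ i, (Matrix.fromCols P Q) i = Sum.elim (P i) (Q i) := by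
      intro i; funext j; cases j <;> rfl
    have hker : ∀ i, Sum.elim (P i) (Q i) ∈
        LinearMap.ker (Matrix.vecMulLinear
          (Matrix.fromRows F (-(Matrix.diagonal fun j => (X : K[X]) ^ d j)))) := by
      intro i
      rw [← hrow i]
      exact hspan ▸ Submodule.subset_span (Set.mem_range_self i)
    have hPQ : ∀ i j, Matrix.vecMul (P i) F j = Q i j * X ^ d j :=
      fun i => (mem_ker_iff_aux d F (P i) (Q i)).mp (hker i)
    have hPmem : ∀ i, P i ∈ approxModule d F :=
      fun i j => ⟨Q i j, by rw [hPQ i j, mul_comm]⟩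
    constructor
    · rw [Fintype.linearIndependent_iff]
      intro c hc
      have hw : (∑ i, c i • Sum.elim (P i) (Q i)) ∈
          LinearMap.ker (Matrix.vecMulLinear
            (Matrix.fromRows F (-(Matrix.diagonal fun j => (X : K[X]) ^ d j)))) :=
        Submodule.sum_mem _ fun i _ => Submodule.smul_mem _ _ (hker i)
      rw [sum_smul_elim, hc] at hw
      have hq0 : (∑ i, c i • Q i) = 0 := by
        have h2 := (mem_ker_iff_aux d F 0 _).mp hw
        funext j
        have := (h2 j).symm
        rw [Matrix.zero_vecMul] at this
        rcases mul_eq_zero.mp this with h | h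
        · exact h
        · exact absurd h (hX j)
      have hzero : (∑ i, c i • (Matrix.fromCols P Q) i) = 0 := by
        simp only [hrow, sum_smul_elim, hc, hq0]
        funext j
        cases j <;> rfl
      exact Fintype.linearIndependent_iff.mp hLI c hzero
    · apply le_antisymm
      · rw [Submodule.span_le]
        rintro _ ⟨i, rfl⟩
        exact hPmem i
      · intro p hp
        choose q hq using fun j => (hp j)
        have hmem : Sum.elim p q ∈
            LinearMap.ker (Matrix.vecMulLinear
              (Matrix.fromRows F (-(Matrix.diagonal fun j => (X : K[X]) ^ d j)))) := by
          rw [mem_ker_iff_aux]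
          intro j
          rw [hq j, mul_comm]
        rw [← hspan] at hmem
        obtain ⟨c, hc⟩ := (Submodule.mem_span_range_iff_exists_fun K[X]).mp hmem
        refine (Submodule.mem_span_range_iff_exists_fun K[X]).mpr ⟨c, ?_⟩
        simp only [hrow, sum_smul_elim] at hc
        have := congrArg (fun w => w ∘ Sum.inl) hc
        funext j
        exact congrFun this j
end
end

section
/- Let d ∈ (Z_{>0})^n, F ∈ K[x]^{m×n} with column degrees < d, and let P ∈ K[x]^{m×m} be a basis of the approximant module A_d(F). Then P·F = Q·diag(x^{d_1},...,x^{d_n}) where Q = P·F·diag(x^{−d_1},...,x^{−d_n}) ∈ K[x]^{m×n}, and there exist V ∈ K[x]^{m×m} and W ∈ K[x]^{n×m} such that P·V + Q·W = I_m. -/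
open Polynomial Matrix

noncomputable section

/-- If `P` is a basis of `A_d(F)` then `P·F = Q·diag(x^{d_j})` with
`Q = P·F·diag(x^{−d_j})`, and `P·V + Q·W = I` for some `V, W`. -/
theorem approx_basis_bezout
    {K : Type*} [Field K] {m n : ℕ} (d : Fin n → ℕ) (hd : ∀ j, 0 < d j)
    (F : Matrix (Fin m) (Fin n) K[X])
    (hF : ∀ i j, (F i j).degree < (d j : ℕ∞))
    (P : Matrix (Fin m) (Fin m) K[X])
    (hP : rowsBasis P (approxModule d F)) :
    ∃ Q : Matrix (Fin m) (Fin n) K[X],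
      P * F = Q * Matrix.diagonal (fun j => (X : K[X]) ^ d j) ∧
      ∃ (V : Matrix (Fin m) (Fin m) K[X]) (W : Matrix (Fin n) (Fin m) K[X]),
        P * V + Q * W = 1 := by
  classical
  -- each row of `P` lies in the approximant module
  have hrow : ∀ i, (P i) ∈ approxModule d F := by
    intro i
    rw [← hP.2]
    exact Submodule.subset_span (Set.mem_range_self i)
  have hvm : ∀ (i : Fin m) (j : Fin n), Matrix.vecMul (P i) F j = (P * F) i j := by
    intro i j
    simp [Matrix.vecMul, Matrix.mul_apply, dotProduct]
  have hdvd : ∀ i j, (X : K[X]) ^ d j ∣ (P * F) i j := by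
    intro i j
    rw [← hvm]
    exact hrow i j
  -- define Q by dividing out x^{d j}
  set Q : Matrix (Fin m) (Fin n) K[X] :=
    fun i j => (hdvd i j).choose with hQdef
  have hPFQ : ∀ i j, (P * F) i j = Q i j * (X : K[X]) ^ d j := by
    intro i j
    rw [hQdef, (hdvd i j).choose_spec]
    ring
  refine ⟨Q, ?_, ?_⟩
  · refine Matrix.ext fun i j => ?_
    rw [Matrix.mul_diagonal]
    exact hPFQ i j
  -- the Bezout part
  -- the combined rows a i = (P i, Q i)
  set a : Fin m → (Fin m ⊕ Fin n → K[X]) :=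
    fun i => Sum.elim (P i) (Q i) with ha_def
  -- the map φ whose kernel the rows of [P Q] span
  set φ : ((Fin m ⊕ Fin n) → K[X]) →ₗ[K[X]] (Fin n → K[X]) :=
    { toFun := fun v j => (∑ i, v (Sum.inl i) * F i j) - v (Sum.inr j) * (X : K[X]) ^ d j
      map_add' := by
        intro x y
        funext j
        simp only [Pi.add_apply, add_mul]
        rw [Finset.sum_add_distrib]
        ring
      map_smul' := by
        intro c x
        funext j
        simp only [Pi.smul_apply, smul_eq_mul, RingHom.id_apply]
        rw [mul_sub, Finset.mul_sum]
        congr 1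
        · exact Finset.sum_congr rfl fun i _ => by ring
        · ring } with hφdef
  have hφ_apply : ∀ v j, φ v j =
      (∑ i, v (Sum.inl i) * F i j) - v (Sum.inr j) * (X : K[X]) ^ d j := fun v j => rfl
  -- rows `a i` are in the kernel of φ
  have ha_ker : ∀ i, a i ∈ LinearMap.ker φ := by
    intro i
    rw [LinearMap.mem_ker]
    funext j
    rw [hφ_apply]
    simp only [ha_def, Sum.elim_inl, Sum.elim_inr, Pi.zero_apply]
    rw [sub_eq_zero, ← hPFQ i j, Matrix.mul_apply]
  -- rows `a i` are linearly independent
  have ha_indep : LinearIndependent K[X] a := by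
    let L : ((Fin m ⊕ Fin n) → K[X]) →ₗ[K[X]] (Fin m → K[X]) :=
      { toFun := fun v k => v (Sum.inl k)
        map_add' := fun x y => rfl
        map_smul' := fun c x => rfl }
    have hLa : LinearIndependent K[X] (L ∘ a) := by
      have : L ∘ a = fun i => P i := by
        funext i
        rfl
      rw [this]
      exact hP.1
    exact LinearIndependent.of_comp L hLa
  -- rows `a i` span the kernel of φ
  have ha_span : Submodule.span K[X] (Set.range a) = LinearMap.ker φ := by
    apply le_antisymm
    · rw [Submodule.span_le]
      rintro _ ⟨i, rfl⟩
      exact ha_ker i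
    · intro v hv
      rw [LinearMap.mem_ker] at hv
      have hvj : ∀ j, (∑ i, v (Sum.inl i) * F i j) = v (Sum.inr j) * (X : K[X]) ^ d j := by
        intro j
        have := congrFun hv j
        rw [hφ_apply] at this
        simpa [sub_eq_zero] using this
      -- the inl-part of v is in the approximant module
      have hp : (fun i => v (Sum.inl i)) ∈ approxModule d F := by
        intro j
        have h5 : Matrix.vecMul (fun i => v (Sum.inl i)) F j
            = ∑ i, v (Sum.inl i) * F i j := by
          simp [Matrix.vecMul, dotProduct]
        rw [h5, hvj j]
        exact Dvd.intro_left _ rfl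
      rw [← hP.2, Submodule.mem_span_range_iff_exists_fun] at hp
      obtain ⟨c, hc⟩ := hp
      rw [Submodule.mem_span_range_iff_exists_fun]
      refine ⟨c, ?_⟩
      funext s
      cases s with
      | inl k =>
        have := congrFun hc k
        simpa [ha_def] using this
      | inr j =>
        -- cancel x^{d j}
        have hX : ((X : K[X]) ^ d j) ≠ 0 := pow_ne_zero _ X_ne_zero
        have hvP : ∀ i, v (Sum.inl i) = ∑ i', c i' * P i' i := by
          intro i
          have := congrFun hc i
          rw [← this, Finset.sum_apply]
          exact Finset.sum_congr rfl fun i' _ => rfl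
        have hsum : (∑ i, c i * Q i j) * (X : K[X]) ^ d j
            = v (Sum.inr j) * (X : K[X]) ^ d j := by
          rw [← hvj j]
          calc (∑ i, c i * Q i j) * (X : K[X]) ^ d j
              = ∑ i, c i * (Q i j * (X : K[X]) ^ d j) := by
                rw [Finset.sum_mul]; exact Finset.sum_congr rfl fun i _ => by ring
            _ = ∑ i, c i * (P * F) i j := by
                exact Finset.sum_congr rfl fun i _ => by rw [hPFQ i j]
            _ = ∑ i, ∑ k, c i * P i k * F k j := by
                refine Finset.sum_congr rfl fun i _ => ?_
                rw [Matrix.mul_apply, Finset.mul_sum]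
                exact Finset.sum_congr rfl fun k _ => by ring
            _ = ∑ k, ∑ i, c i * P i k * F k j := Finset.sum_comm
            _ = ∑ k, (∑ i, c i * P i k) * F k j := by
                refine Finset.sum_congr rfl fun k _ => ?_
                rw [Finset.sum_mul]
            _ = ∑ k, v (Sum.inl k) * F k j := by
                refine Finset.sum_congr rfl fun k _ => ?_
                rw [hvP k]
        have := mul_right_cancel₀ hX hsum
        simp only [Finset.sum_apply, Pi.smul_apply, smul_eq_mul, ha_def, Sum.elim_inr]
        exact this
  -- basis of the span of the rows
  let b : Module.Basis (Fin m) K[X] (Submodule.span K[X] (Set.range a)) := Module.Basis.span ha_indep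
  -- splitting of φ : get a projection π onto ker φ
  obtain ⟨s, hs⟩ := Module.projective_lifting_property φ.rangeRestrict LinearMap.id
    φ.surjective_rangeRestrict
  set π : ((Fin m ⊕ Fin n) → K[X]) →ₗ[K[X]] ((Fin m ⊕ Fin n) → K[X]) :=
    LinearMap.id - s ∘ₗ φ.rangeRestrict with hπdef
  have hπ_ker : ∀ x, π x ∈ Submodule.span K[X] (Set.range a) := by
    intro x
    rw [ha_span, LinearMap.mem_ker]
    have h6 : φ (s (φ.rangeRestrict x)) = φ x := by
      have h1 : φ.rangeRestrict (s (φ.rangeRestrict x)) = φ.rangeRestrict x := by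
        have := congrArg (fun f => f (φ.rangeRestrict x)) hs
        exact this
      have := congrArg (Subtype.val) h1
      simpa [LinearMap.rangeRestrict] using this
    simp [hπdef, map_sub, h6]
  have hπ_fix : ∀ x ∈ Submodule.span K[X] (Set.range a), π x = x := by
    intro x hx
    rw [ha_span, LinearMap.mem_ker] at hx
    have h7 : φ.rangeRestrict x = 0 := by
      apply Subtype.ext
      simpa using hx
    simp [hπdef, h7]
  -- the retraction g : K[x]^{m+n} → K[x]^m
  set πN : ((Fin m ⊕ Fin n) → K[X]) →ₗ[K[X]] (Submodule.span K[X] (Set.range a)) :=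
    LinearMap.codRestrict _ π hπ_ker with hπN
  set g : ((Fin m ⊕ Fin n) → K[X]) →ₗ[K[X]] (Fin m → K[X]) :=
    ((Finsupp.linearEquivFunOnFinite K[X] K[X] (Fin m)).toLinearMap ∘ₗ
      (b.repr.toLinearMap)) ∘ₗ πN with hg_def
  have hg_a : ∀ i, g (a i) = Pi.single i 1 := by
    intro i
    have hmem : a i ∈ Submodule.span K[X] (Set.range a) :=
      Submodule.subset_span (Set.mem_range_self i)
    have h1 : πN (a i) = ⟨a i, hmem⟩ := by
      apply Subtype.ext
      simp only [hπN, LinearMap.codRestrict_apply]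
      exact hπ_fix _ hmem
    have h2 : (⟨a i, hmem⟩ : Submodule.span K[X] (Set.range a)) = b i := by
      apply Subtype.ext
      simp [b, Module.Basis.span_apply]
    have h3 : b.repr (b i) = Finsupp.single i 1 := b.repr_self i
    funext k
    simp only [hg_def, LinearMap.comp_apply, h1, h2, LinearEquiv.coe_coe, h3]
    simp [Finsupp.linearEquivFunOnFinite, Finsupp.single_apply, Pi.single_apply, eq_comm]
    exact Finsupp.single_apply.symm
  -- build the matrices V and W
  set R : Matrix (Fin m ⊕ Fin n) (Fin m) K[X] :=
    fun k i => g (Pi.single k 1) i with hR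
  have key : ∀ i i', (∑ k, a i k * R k i') = (1 : Matrix (Fin m) (Fin m) K[X]) i i' := by
    intro i i'
    have expand : a i = ∑ k, (a i k) • (Pi.single k 1 : Fin m ⊕ Fin n → K[X]) := by
      funext t
      rw [Finset.sum_apply]
      simp [Pi.single_apply, mul_comm]
    have hgsum : g (a i) = ∑ k, (a i k) • g (Pi.single k 1) := by
      conv_lhs => rw [expand]
      rw [map_sum]
      exact Finset.sum_congr rfl fun k _ => by rw [LinearMap.map_smul]
    have h4 : g (a i) i' = ∑ k, a i k * R k i' := by
      rw [hgsum, Finset.sum_apply]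
      exact Finset.sum_congr rfl fun k _ => by simp [hR, smul_eq_mul]
    rw [← h4, hg_a i]
    simp [Matrix.one_apply, Pi.single_apply, eq_comm]
  refine ⟨Matrix.of fun k i => R (Sum.inl k) i, Matrix.of fun j i => R (Sum.inr j) i, ?_⟩
  refine Matrix.ext fun i i' => ?_
  rw [Matrix.add_apply, Matrix.mul_apply, Matrix.mul_apply, ← key i i']
  rw [Fintype.sum_sum_type]
  simp [ha_def]
end
end

section
/- Let d ∈ (Z_{>0})^n and F ∈ K[x]^{m×n} with column degrees < d. Let P ∈ K[x]^{m×m} satisfy: (a) P·F ≡ 0 mod diag(x^{d_1},...,x^{d_n}); (b) det(P) is a nonzero monomial c·x^δ. Let C ∈ K^{m×n} be the constant coefficient of P·F·diag(x^{−d_1},...,x^{−d_n}). Then P is a basis of the approximant module A_d(F) if and only if the m×(m+n) constant matrix [P(0) C] has rank m. -/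
open Polynomial Matrix

noncomputable section

lemma rank_eq_iff_ker {K : Type*} [Field K] {m : ℕ} {k : Type*} [Fintype k]
    (A : Matrix (Fin m) k K) :
    A.rank = m ↔ ∀ u : Fin m → K, u ᵥ* A = 0 → u = 0 := by
  rw [← Matrix.rank_transpose]
  have hrn := LinearMap.finrank_range_add_finrank_ker (Aᵀ.mulVecLin)
  have hdom : Module.finrank K (Fin m → K) = m := by simp
  rw [hdom] at hrn
  have hdef : Aᵀ.rank = Module.finrank K (LinearMap.range Aᵀ.mulVecLin) := rfl
  constructor
  · intro hr u hu
    have h0 : Module.finrank K (LinearMap.ker Aᵀ.mulVecLin) = 0 := by omega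
    have hbot : LinearMap.ker Aᵀ.mulVecLin = ⊥ := Submodule.finrank_eq_zero.mp h0
    have hu' : u ∈ LinearMap.ker Aᵀ.mulVecLin := by
      rw [LinearMap.mem_ker, Matrix.mulVecLin_apply, Matrix.mulVec_transpose, hu]
    rwa [hbot, Submodule.mem_bot] at hu'
  · intro h
    have hbot : LinearMap.ker Aᵀ.mulVecLin = ⊥ := by
      ext u
      simp only [LinearMap.mem_ker, Submodule.mem_bot, Matrix.mulVecLin_apply,
        Matrix.mulVec_transpose]
      exact ⟨h u, fun hu => by rw [hu]; simp⟩
    rw [hbot, finrank_bot] at hrn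
    omega

lemma row_mem_span {R : Type*} [CommRing R] {m k l : ℕ} (V : Matrix (Fin m) (Fin k) R)
    (Q : Matrix (Fin k) (Fin l) R) (i : Fin m) :
    (V * Q) i ∈ Submodule.span R (Set.range fun t => Q t) := by
  have h : (V * Q) i = ∑ t, V i t • Q t := by
    funext j; simp [Matrix.mul_apply, Finset.sum_apply]
  rw [h]
  exact Submodule.sum_mem _ fun t _ => Submodule.smul_mem _ _ (Submodule.subset_span ⟨t, rfl⟩)

/-- Certification of approximant bases via the rank of `[P(0) C]`. -/
theorem approx_basis_iff_full_rank
    {K : Type*} [Field K] {m n : ℕ} (d : Fin n → ℕ) (hd : ∀ j, 0 < d j)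
    (F : Matrix (Fin m) (Fin n) K[X])
    (hF : ∀ i j, (F i j).degree < (d j : ℕ∞))
    (P : Matrix (Fin m) (Fin m) K[X])
    (hdvd : ∀ i j, (X : K[X]) ^ d j ∣ (P * F) i j)
    (hdet : ∃ c : K, c ≠ 0 ∧ ∃ δ : ℕ, P.det = Polynomial.C c * X ^ δ) :
    rowsBasis P (approxModule d F) ↔
      (Matrix.fromCols (P.map (Polynomial.eval 0))
        (Matrix.of fun i j => ((P * F) i j).coeff (d j))).rank = m := by
  classical
  obtain ⟨c, hc, δ, hdeteq⟩ := hdet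
  have hdetP : P.det ≠ 0 := by
    rw [hdeteq]
    exact mul_ne_zero (C_ne_zero.mpr hc) (pow_ne_zero _ X_ne_zero)
  have hvecMulP : ∀ v : Fin m → K[X], v ᵥ* P = 0 → v = 0 := by
    intro v hv
    by_contra h
    exact hdetP (Matrix.exists_vecMul_eq_zero_iff.mp ⟨v, h, hv⟩)
  have hPmem : ∀ i, P i ∈ approxModule d F := by
    intro i j
    have h : Matrix.vecMul (P i) F j = (P * F) i j := by
      simp [Matrix.vecMul, Matrix.mul_apply, dotProduct]
    rw [h]
    exact hdvd i j
  have hindep : LinearIndependent K[X] (fun i => P i) := by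
    rw [Fintype.linearIndependent_iff]
    intro g hg
    have hgv : g ᵥ* P = 0 := by
      funext j
      have := congrFun hg j
      simpa [Matrix.vecMul, dotProduct, Finset.sum_apply] using this
    exact fun i => congrFun (hvecMulP g hgv) i
  set Cmat : Matrix (Fin m) (Fin n) K := Matrix.of fun i j => ((P * F) i j).coeff (d j) with hCmat
  constructor
  · -- basis → full rank
    rintro ⟨-, hspan⟩
    rw [rank_eq_iff_ker]
    intro u hu
    rw [Matrix.vecMul_fromCols] at hu
    have hu1 : u ᵥ* (P.map (Polynomial.eval 0)) = 0 := by
      funext j; simpa using congrFun hu (Sum.inl j)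
    have hu2 : u ᵥ* Cmat = 0 := by
      funext j; simpa using congrFun hu (Sum.inr j)
    set uc : Fin m → K[X] := fun i => Polynomial.C (u i) with huc
    have hcoeff0 : ∀ j, ((uc ᵥ* P) j).coeff 0 = 0 := by
      intro j
      have := congrFun hu1 j
      simp only [Matrix.vecMul, dotProduct, Pi.zero_apply, Matrix.map_apply] at this ⊢
      rw [Polynomial.finset_sum_coeff]
      simpa [huc, Polynomial.coeff_C_mul, Polynomial.coeff_zero_eq_eval_zero] using this
    set q : Fin m → K[X] := fun i => ((uc ᵥ* P) i).divX with hq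
    have hXq : ∀ i, X * q i = (uc ᵥ* P) i := by
      intro i
      have := Polynomial.X_mul_divX_add (p := (uc ᵥ* P) i)
      rw [hcoeff0 i] at this
      simpa using this
    have hqmem : q ∈ approxModule d F := by
      intro j
      have hXqf : uc ᵥ* P = (X : K[X]) • q := by
        funext i; rw [Pi.smul_apply, smul_eq_mul, hXq]
      have h1 : (uc ᵥ* (P * F)) j = X * Matrix.vecMul q F j := by
        rw [← Matrix.vecMul_vecMul, hXqf, Matrix.smul_vecMul, Pi.smul_apply, smul_eq_mul]
      have h3 : (X : K[X]) ^ d j ∣ (uc ᵥ* (P * F)) j := by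
        simp only [Matrix.vecMul, dotProduct]
        exact Finset.dvd_sum fun i _ => (hdvd i j).mul_left _
      have h4 : ((uc ᵥ* (P * F)) j).coeff (d j) = 0 := by
        have := congrFun hu2 j
        simp only [Matrix.vecMul, dotProduct, Pi.zero_apply, hCmat, Matrix.of_apply]
          at this ⊢
        rw [Polynomial.finset_sum_coeff]
        simpa [huc, Polynomial.coeff_C_mul] using this
      have h5 : (X : K[X]) ^ (d j + 1) ∣ (uc ᵥ* (P * F)) j := by
        rw [Polynomial.X_pow_dvd_iff]
        intro e he
        rcases Nat.lt_succ_iff_lt_or_eq.mp he with h | h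
        · exact Polynomial.X_pow_dvd_iff.mp h3 e h
        · rw [h]; exact h4
      rw [h1, pow_succ, mul_comm ((X:K[X]) ^ d j) X] at h5
      exact (mul_dvd_mul_iff_left (X_ne_zero (R := K))).mp h5
    rw [← hspan] at hqmem
    obtain ⟨w, hw⟩ := (Submodule.mem_span_range_iff_exists_fun K[X]).mp hqmem
    have hwq : w ᵥ* P = q := by
      funext j
      have := congrFun hw j
      simpa [Matrix.vecMul, dotProduct, Finset.sum_apply] using this
    have hsub : (uc - (X:K[X]) • w) ᵥ* P = 0 := by
      rw [Matrix.sub_vecMul, Matrix.smul_vecMul, hwq]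
      funext j
      simp [← hXq j]
    have h0 : uc = (X:K[X]) • w := by
      have := hvecMulP _ hsub
      rwa [sub_eq_zero] at this
    funext i
    have := congrArg (fun p : K[X] => p.coeff 0) (congrFun h0 i)
    simpa [Polynomial.mul_coeff_zero, huc] using this
  · -- full rank → basis
    intro hrank
    rw [rank_eq_iff_ker] at hrank
    set N := approxModule d F with hN
    obtain ⟨k, B⟩ := Submodule.basisOfPid (Pi.basisFun K[X] (Fin m)) N
    have hle1 : k ≤ m := by
      have := (Pi.basisFun K[X] (Fin m)).card_le_card_of_linearIndependent
        (B.linearIndependent.map' N.subtype N.ker_subtype)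
      simpa using this
    have hle2 : m ≤ k := by
      have hli : LinearIndependent K[X] (fun i => (⟨P i, hPmem i⟩ : N)) := by
        apply LinearIndependent.of_comp N.subtype
        exact hindep
      have := B.card_le_card_of_linearIndependent hli
      simpa using this
    have hkm : k = m := le_antisymm hle1 hle2
    subst hkm
    set Bmat : Matrix (Fin k) (Fin k) K[X] := Matrix.of (fun t => ((B t : N) : Fin k → K[X]))
      with hBmat
    set U : Matrix (Fin k) (Fin k) K[X] :=
      Matrix.of (fun i t => B.repr ⟨P i, hPmem i⟩ t) with hU
    have hPUB : P = U * Bmat := by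
      funext i j
      have hsum := B.sum_repr ⟨P i, hPmem i⟩
      have h2 : P i j = ∑ t, (B.repr ⟨P i, hPmem i⟩ t) * ((B t : N) : Fin k → K[X]) j := by
        conv_lhs => rw [show P i j = ((⟨P i, hPmem i⟩ : N) : Fin k → K[X]) j from rfl, ← hsum]
        simp [-Module.Basis.sum_repr, Submodule.coe_sum, Finset.sum_apply]
      rw [Matrix.mul_apply, h2]
      rfl
    have hdetfac : P.det = U.det * Bmat.det := by rw [hPUB, Matrix.det_mul]
    have hUdet0 : Polynomial.eval 0 U.det ≠ 0 := by
      intro h0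
      have hdet0 : (U.map (Polynomial.eval (0:K))).det = 0 := by
        have h := RingHom.map_det (Polynomial.evalRingHom (0:K)) U
        rw [RingHom.mapMatrix_apply, Polynomial.coe_evalRingHom] at h
        rw [← h]
        exact h0
      obtain ⟨u, hu0, huU⟩ := Matrix.exists_vecMul_eq_zero_iff.mpr hdet0
      apply hu0
      apply hrank
      rw [Matrix.vecMul_fromCols]
      set uc : Fin k → K[X] := fun i => Polynomial.C (u i) with huc
      have hr0 : ∀ t, ((uc ᵥ* U) t).coeff 0 = 0 := by
        intro t
        have := congrFun huU t
        simp only [Matrix.vecMul, dotProduct, Pi.zero_apply, Matrix.map_apply]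
          at this ⊢
        rw [Polynomial.finset_sum_coeff]
        simpa [huc, Polynomial.coeff_C_mul, Polynomial.coeff_zero_eq_eval_zero] using this
      have hucP : uc ᵥ* P = (uc ᵥ* U) ᵥ* Bmat := by rw [hPUB, Matrix.vecMul_vecMul]
      have comp1 : u ᵥ* P.map (Polynomial.eval 0) = 0 := by
        funext j
        have he : (u ᵥ* P.map (Polynomial.eval 0)) j = Polynomial.eval 0 ((uc ᵥ* P) j) := by
          simp [Matrix.vecMul, dotProduct, huc, Polynomial.eval_finset_sum]
        rw [he, hucP]
        have hunf : ((uc ᵥ* U) ᵥ* Bmat) j = ∑ t, ((uc ᵥ* U) t) * Bmat t j := rfl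
        rw [hunf, Polynomial.eval_finset_sum]
        apply Finset.sum_eq_zero
        intro t _
        rw [Polynomial.eval_mul, ← Polynomial.coeff_zero_eq_eval_zero, hr0 t, zero_mul]
      have comp2 : u ᵥ* Cmat = 0 := by
        funext j
        have he : (u ᵥ* Cmat) j = ((uc ᵥ* (P * F)) j).coeff (d j) := by
          simp only [Matrix.vecMul, dotProduct, hCmat, Matrix.of_apply, huc]
          rw [Polynomial.finset_sum_coeff]
          simp [Polynomial.coeff_C_mul]
        rw [he]
        have hfac : uc ᵥ* (P * F) = (uc ᵥ* U) ᵥ* (Bmat * F) := by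
          rw [hPUB, Matrix.mul_assoc, ← Matrix.vecMul_vecMul]
        rw [hfac]
        have hdvdj : (X:K[X]) ^ (d j + 1) ∣ ((uc ᵥ* U) ᵥ* (Bmat * F)) j := by
          simp only [Matrix.vecMul, dotProduct]
          apply Finset.dvd_sum
          intro t _
          have hBF : (X:K[X]) ^ d j ∣ (Bmat * F) t j := by
            have hmem := (B t).2 j
            have hrow : Matrix.vecMul ((B t : N) : Fin k → K[X]) F j = (Bmat * F) t j := by
              simp [Matrix.vecMul, Matrix.mul_apply, dotProduct, hBmat]
            rw [← hrow]
            exact hmem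
          have hXr : (X:K[X]) ∣ (uc ᵥ* U) t := by
            rw [Polynomial.X_dvd_iff]
            exact hr0 t
          have hpow : (X:K[X]) ^ (d j + 1) = X * X ^ d j := by ring
          rw [hpow]
          exact mul_dvd_mul hXr hBF
        exact Polynomial.X_pow_dvd_iff.mp hdvdj (d j) (Nat.lt_succ_self _)
      funext x
      cases x with
      | inl a => simp [comp1]
      | inr b => simp [comp2]
    have hXndvd : ¬ (X : K[X]) ∣ U.det := by
      rw [Polynomial.X_dvd_iff, Polynomial.coeff_zero_eq_eval_zero]
      exact hUdet0
    have hco : IsCoprime (X : K[X]) U.det := (Polynomial.prime_X.coprime_iff_not_dvd).mpr hXndvd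
    have hdvdc : U.det ∣ Polynomial.C c := by
      apply IsCoprime.dvd_of_dvd_mul_right ((hco.pow_left : IsCoprime ((X:K[X])^δ) U.det).symm)
      exact ⟨Bmat.det, by rw [← hdeteq, hdetfac]⟩
    have hUdetUnit : IsUnit U.det :=
      isUnit_of_dvd_unit hdvdc (Polynomial.isUnit_C.mpr (isUnit_iff_ne_zero.mpr hc))
    have hUinvmul : U⁻¹ * U = 1 := Matrix.nonsing_inv_mul U hUdetUnit
    have hBm : Bmat = U⁻¹ * P := by
      rw [hPUB, ← Matrix.mul_assoc, hUinvmul, Matrix.one_mul]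
    have hspanB : Submodule.span K[X] (Set.range fun t => Bmat t) = N := by
      have h1 : (Set.range fun t => Bmat t) = N.subtype '' Set.range B := by
        rw [← Set.range_comp]; rfl
      rw [h1, Submodule.span_image, Module.Basis.span_eq, Submodule.map_top, Submodule.range_subtype]
    refine ⟨hindep, ?_⟩
    apply le_antisymm
    · rw [← hspanB]
      apply Submodule.span_le.mpr
      rintro _ ⟨i, rfl⟩
      have := row_mem_span U Bmat i
      rwa [← hPUB] at this
    · rw [← hspanB]
      apply Submodule.span_le.mpr
      rintro _ ⟨t, rfl⟩
      have := row_mem_span U⁻¹ P t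
      rwa [← hBm] at this
end
end

section
/- Let d ∈ (Z_{>0})^n, F ∈ K[x]^{m×n} with column degrees < d, and let P ∈ K[x]^{m×m} be a basis of A_d(F). Then det(P) divides x^{m·max(d)}; in particular det(P) is a nonzero monomial in K[x]. -/
open Polynomial Matrix

noncomputable section

/-- The determinant of a basis of `A_d(F)` divides `x^{m·max(d)}`; in particular it
is a nonzero monomial. -/
theorem approx_basis_det_monomial
    {K : Type*} [Field K] {m n : ℕ} (d : Fin n → ℕ) (hd : ∀ j, 0 < d j)
    (F : Matrix (Fin m) (Fin n) K[X])
    (hF : ∀ i j, (F i j).degree < (d j : ℕ∞))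
    (P : Matrix (Fin m) (Fin m) K[X])
    (hP : rowsBasis P (approxModule d F)) :
    P.det ∣ (X : K[X]) ^ (m * Finset.univ.sup d) ∧
      ∃ c : K, c ≠ 0 ∧ ∃ δ : ℕ, P.det = Polynomial.C c * X ^ δ := by
  set s := Finset.univ.sup d with hs
  -- the rows of X^s • I belong to approxModule
  have hrow : ∀ i : Fin m, (fun k => if k = i then (X : K[X]) ^ s else 0) ∈
      approxModule d F := by
    intro i j
    have : Matrix.vecMul (fun k => if k = i then (X : K[X]) ^ s else 0) F j
        = (X : K[X]) ^ s * F i j := by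
      simp [Matrix.vecMul, dotProduct, ite_mul]
    rw [this]
    exact Dvd.dvd.mul_right
      (pow_dvd_pow X (Finset.le_sup (Finset.mem_univ j))) _
  -- hence each such row is a combination of rows of P
  have hcomb : ∀ i : Fin m, ∃ c : Fin m → K[X],
      (∑ k, c k • P k) = (fun k => if k = i then (X : K[X]) ^ s else 0) := by
    intro i
    have := hrow i
    rw [← hP.2] at this
    exact (Submodule.mem_span_range_iff_exists_fun _).mp this
  choose U hU using hcomb
  have hmat : (Matrix.of U) * P = Matrix.diagonal (fun _ : Fin m => (X : K[X]) ^ s) := by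
    ext i j
    have := congrFun (hU i) j
    simp only [Finset.sum_apply, Pi.smul_apply, smul_eq_mul] at this
    simp only [Matrix.mul_apply, Matrix.of_apply, this, Matrix.diagonal_apply]
    by_cases h : i = j <;> simp [h, eq_comm]
  have hdet : (Matrix.of U).det * P.det = (X : K[X]) ^ (m * s) := by
    rw [← Matrix.det_mul, hmat, Matrix.det_diagonal, Finset.prod_const,
      Finset.card_univ, Fintype.card_fin, ← pow_mul, mul_comm s m]
  have hdvd : P.det ∣ (X : K[X]) ^ (m * s) := Dvd.intro_left _ hdet
  refine ⟨hdvd, ?_⟩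
  obtain ⟨i, hi, hass⟩ := (dvd_prime_pow Polynomial.prime_X (m * s)).mp hdvd
  obtain ⟨u, hu⟩ := hass.symm
  obtain ⟨c, hc, hcu⟩ := Polynomial.isUnit_iff.mp u.isUnit
  refine ⟨c, fun h => by simp [h] at hc, i, ?_⟩
  rw [← hu, ← hcu, mul_comm]
end
end

section
/- Let d ∈ (Z_{>0})^n, F ∈ K[x]^{m×n} with column degrees < d, s ∈ Z^m a shift, and P ∈ K[x]^{m×m}. Then P is an s-minimal basis of A_d(F) if and only if the following four conditions hold: (i) P is s-reduced; (ii) det(P) is a nonzero monomial; (iii) P·F ≡ 0 mod diag(x^{d_1},...,x^{d_n}); (iv) the constant matrix [P(0) C] ∈ K^{m×(m+n)} has rank m, where C is the constant coefficient of P·F·diag(x^{−d_1},...,x^{−d_n}). -/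
open Polynomial Matrix

noncomputable section

def sRowDeg {m : ℕ} {K : Type*} [Field K] (s : Fin m → ℤ)
    (P : Matrix (Fin m) (Fin m) K[X]) (i : Fin m) : WithBot ℤ :=
  Finset.univ.sup fun j => WithBot.map (fun k : ℕ => (k : ℤ) + s j) (P i j).degree

def sLeadingMatrix {m : ℕ} {K : Type*} [Field K] (s : Fin m → ℤ)
    (P : Matrix (Fin m) (Fin m) K[X]) : Matrix (Fin m) (Fin m) K :=
  Matrix.of fun i j =>
    WithBot.recBotCoe 0
      (fun r => if 0 ≤ r - s j then (P i j).coeff (r - s j).toNat else 0)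
      (sRowDeg s P i)

/-- `P` is `s`-reduced when its `s`-leading matrix is invertible. -/
def sReduced {m : ℕ} {K : Type*} [Field K] (s : Fin m → ℤ)
    (P : Matrix (Fin m) (Fin m) K[X]) : Prop :=
  IsUnit (sLeadingMatrix s P).det

namespace SMinimalAux

variable {K : Type*} [Field K] {m n : ℕ}

lemma vecMul_eq_sum_smul {R : Type*} [CommRing R] {a b : ℕ} (v : Fin a → R)
    (M : Matrix (Fin a) (Fin b) R) : v ᵥ* M = ∑ i, v i • M i := by
  ext j
  simp [Matrix.vecMul, dotProduct, Finset.sum_apply]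

lemma vecMul_apply {R : Type*} [CommRing R] {a : Type*} [Fintype a] {b : Type*}
    (v : a → R) (M : Matrix a b R) (j : b) : (v ᵥ* M) j = ∑ i, v i * M i j := rfl

lemma rank_eq_card_rows_iff {N : Type*} [Fintype N] (A : Matrix (Fin m) N K) :
    A.rank = m ↔ ∀ v : Fin m → K, v ᵥ* A = 0 → v = 0 := by
  rw [← Matrix.rank_transpose, Matrix.rank]
  have h := LinearMap.finrank_range_add_finrank_ker (Aᵀ.mulVecLin)
  rw [Module.finrank_pi, Fintype.card_fin] at h
  constructor
  · intro hr v hv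
    have hker : LinearMap.ker Aᵀ.mulVecLin = ⊥ := by
      rw [← Submodule.finrank_eq_zero (R := K)]
      omega
    have : Aᵀ.mulVecLin v = 0 := by
      rw [Matrix.mulVecLin_apply, Matrix.mulVec_transpose]; exact hv
    have hmem : v ∈ LinearMap.ker Aᵀ.mulVecLin := this
    rwa [hker, Submodule.mem_bot] at hmem
  · intro hv
    have hker : LinearMap.ker Aᵀ.mulVecLin = ⊥ := by
      rw [LinearMap.ker_eq_bot']
      intro v h0
      exact hv v (by rwa [Matrix.mulVecLin_apply, Matrix.mulVec_transpose] at h0)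
    rw [hker] at h
    simpa using h

/-- coeff of a product when the right factor is divisible by `X^k`. -/
lemma coeff_mul_of_dvd {q f : K[X]} {k : ℕ} (h : (X : K[X]) ^ k ∣ f) :
    (q * f).coeff k = q.coeff 0 * f.coeff k := by
  obtain ⟨g, rfl⟩ := h
  have h1 : q * (X ^ k * g) = X ^ k * (q * g) := by ring
  rw [h1]
  have h2 := Polynomial.coeff_X_pow_mul (q * g) k 0
  have h3 := Polynomial.coeff_X_pow_mul g k 0
  rw [zero_add] at h2 h3
  rw [h2, h3, Polynomial.mul_coeff_zero]

lemma eval0_vecMul (q : Fin m → K[X]) (P : Matrix (Fin m) (Fin m) K[X]) (j : Fin m) :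
    ((q ᵥ* P) j).eval 0 = ((fun i => (q i).eval 0) ᵥ* (P.map (Polynomial.eval 0))) j := by
  simp [Matrix.vecMul, dotProduct, Polynomial.eval_finset_sum]

lemma mem_approxModule_iff {d : Fin n → ℕ} {F : Matrix (Fin m) (Fin n) K[X]}
    {p : Fin m → K[X]} :
    p ∈ approxModule d F ↔ ∀ j, (X : K[X]) ^ d j ∣ Matrix.vecMul p F j := Iff.rfl

lemma splitRank {d : Fin n → ℕ} {F : Matrix (Fin m) (Fin n) K[X]}
    {P : Matrix (Fin m) (Fin m) K[X]}
    (hrank : (Matrix.fromCols (P.map (Polynomial.eval 0))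
        (Matrix.of fun i j => ((P * F) i j).coeff (d j))).rank = m)
    (v : Fin m → K) (h1 : v ᵥ* P.map (Polynomial.eval 0) = 0)
    (h2 : v ᵥ* (Matrix.of fun i j => ((P * F) i j).coeff (d j)) = 0) : v = 0 := by
  refine (rank_eq_card_rows_iff _).mp hrank v ?_
  rw [Matrix.vecMul_fromCols, h1, h2]
  ext (j | j) <;> rfl

lemma coeff_zero_eq_zero {d : Fin n → ℕ} {F : Matrix (Fin m) (Fin n) K[X]}
    {P : Matrix (Fin m) (Fin m) K[X]}
    (hdvd : ∀ i j, (X : K[X]) ^ d j ∣ (P * F) i j)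
    (hrank : (Matrix.fromCols (P.map (Polynomial.eval 0))
        (Matrix.of fun i j => ((P * F) i j).coeff (d j))).rank = m)
    (q : Fin m → K[X])
    (h1 : ∀ j, ((q ᵥ* P) j).eval 0 = 0)
    (h2 : ∀ j, ((q ᵥ* (P * F)) j).coeff (d j) = 0)
    (i : Fin m) : (q i).coeff 0 = 0 := by
  have hv : (fun i => (q i).coeff 0) = (0 : Fin m → K) := by
    refine splitRank hrank _ ?_ ?_
    · ext j
      have := h1 j
      rw [eval0_vecMul] at this
      simpa [Polynomial.coeff_zero_eq_eval_zero] using this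
    · ext j
      have hsum : (q ᵥ* (P * F)) j = ∑ i, q i * (P * F) i j := rfl
      have := h2 j
      rw [hsum, Polynomial.finset_sum_coeff] at this
      have heq : ∀ i ∈ Finset.univ, (q i * (P * F) i j).coeff (d j)
          = (q i).coeff 0 * ((P * F) i j).coeff (d j) :=
        fun i _ => coeff_mul_of_dvd (hdvd i j)
      rw [Finset.sum_congr rfl heq] at this
      simpa [vecMul_apply] using this
  exact congrFun hv i

lemma vecMul_smul_one {R : Type*} [CommRing R] (v : Fin m → R) (a : R) :
    v ᵥ* (a • (1 : Matrix (Fin m) (Fin m) R)) = a • v := by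
  ext j
  simp [vecMul_apply, Matrix.smul_apply, Matrix.one_apply, mul_ite,
    Finset.sum_ite_eq, mul_comm]

lemma rowsBasis_of_conditions {d : Fin n → ℕ} {F : Matrix (Fin m) (Fin n) K[X]}
    {P : Matrix (Fin m) (Fin m) K[X]}
    (hdet : ∃ c : K, c ≠ 0 ∧ ∃ δ : ℕ, P.det = Polynomial.C c * X ^ δ)
    (hdvd : ∀ i j, (X : K[X]) ^ d j ∣ (P * F) i j)
    (hrank : (Matrix.fromCols (P.map (Polynomial.eval 0))
        (Matrix.of fun i j => ((P * F) i j).coeff (d j))).rank = m) :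
    rowsBasis P (approxModule d F) := by
  obtain ⟨c, hc, δ, hPdet⟩ := hdet
  have hdet0 : P.det ≠ 0 := by
    rw [hPdet]
    exact mul_ne_zero (by simpa using hc) (pow_ne_zero _ Polynomial.X_ne_zero)
  constructor
  · rw [Fintype.linearIndependent_iff]
    intro g hg i
    have hg' : g ᵥ* P = 0 := by rw [vecMul_eq_sum_smul]; exact hg
    have h0 : g ᵥ* (P * P.adjugate) = 0 := by
      rw [← Matrix.vecMul_vecMul, hg', Matrix.zero_vecMul]
    rw [Matrix.mul_adjugate, vecMul_smul_one] at h0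
    have h2 : P.det * g i = 0 := by
      have := congrFun h0 i
      simpa [smul_eq_mul] using this
    exact (mul_eq_zero.mp h2).resolve_left hdet0
  · apply le_antisymm
    · rw [Submodule.span_le]
      rintro _ ⟨i, rfl⟩
      intro j
      have heq : Matrix.vecMul (P i) F j = (P * F) i j := by
        simp [Matrix.vecMul, dotProduct, Matrix.mul_apply]
      rw [heq]
      exact hdvd i j
    · intro p hp
      have key : ∀ k (q : Fin m → K[X]), q ᵥ* P = (X : K[X]) ^ k • p →
          p ∈ Submodule.span K[X] (Set.range fun i => P i) := by
        intro k
        induction k with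
        | zero =>
          intro q hq
          refine (Submodule.mem_span_range_iff_exists_fun _).mpr ⟨q, ?_⟩
          rw [← vecMul_eq_sum_smul, hq, pow_zero, one_smul]
        | succ k ih =>
          intro q hq
          have h1 : ∀ j, ((q ᵥ* P) j).eval 0 = 0 := by
            intro j
            rw [hq]
            simp [Pi.smul_apply, smul_eq_mul]
          have h2 : ∀ j, ((q ᵥ* (P * F)) j).coeff (d j) = 0 := by
            intro j
            rw [← Matrix.vecMul_vecMul, hq, Matrix.smul_vecMul]
            have hd2 : (X : K[X]) ^ (d j + (k + 1)) ∣ ((X : K[X]) ^ (k + 1) • (p ᵥ* F)) j := by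
              rw [Pi.smul_apply, smul_eq_mul, pow_add]
              simpa [mul_comm] using mul_dvd_mul (hp j) (dvd_refl ((X : K[X]) ^ (k + 1)))
            exact Polynomial.X_pow_dvd_iff.mp hd2 (d j) (by omega)
          have h3 : ∀ i, (q i).coeff 0 = 0 := coeff_zero_eq_zero hdvd hrank q h1 h2
          have h4 : ∀ i, ∃ r, q i = X * r := fun i => Polynomial.X_dvd_iff.mpr (h3 i)
          choose r hr using h4
          refine ih r ?_
          have hq2 : (fun i => (X : K[X]) * r i) ᵥ* P = (X : K[X]) ^ (k + 1) • p := by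
            rw [show (fun i => (X : K[X]) * r i) = q from funext fun i => (hr i).symm]
            exact hq
          have hXr : (fun i => (X : K[X]) * r i) = (X : K[X]) • r := rfl
          rw [hXr, Matrix.smul_vecMul] at hq2
          funext j
          have hj := congrFun hq2 j
          simp only [Pi.smul_apply, smul_eq_mul] at hj ⊢
          apply mul_left_cancel₀ (Polynomial.X_ne_zero (R := K))
          rw [hj]
          ring
      refine key δ (Polynomial.C c⁻¹ • (p ᵥ* P.adjugate)) ?_
      rw [Matrix.smul_vecMul, Matrix.vecMul_vecMul, Matrix.adjugate_mul, hPdet,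
        vecMul_smul_one, smul_smul, ← mul_assoc, ← Polynomial.C_mul,
        inv_mul_cancel₀ hc, Polynomial.C_1, one_mul]

lemma conditions_of_rowsBasis {d : Fin n → ℕ} {F : Matrix (Fin m) (Fin n) K[X]}
    {P : Matrix (Fin m) (Fin m) K[X]} (hB : rowsBasis P (approxModule d F)) :
    (∃ c : K, c ≠ 0 ∧ ∃ δ : ℕ, P.det = Polynomial.C c * X ^ δ) ∧
      (∀ i j, (X : K[X]) ^ d j ∣ (P * F) i j) ∧
      (Matrix.fromCols (P.map (Polynomial.eval 0))
        (Matrix.of fun i j => ((P * F) i j).coeff (d j))).rank = m := by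
  obtain ⟨hli, hspan⟩ := hB
  have hPF : ∀ (i : Fin m) (j : Fin n), (P * F) i j = Matrix.vecMul (P i) F j := by
    intro i j
    simp [Matrix.vecMul, dotProduct, Matrix.mul_apply]
  have hrow : ∀ i, (P i) ∈ approxModule d F := by
    intro i
    rw [← hspan]
    exact Submodule.subset_span ⟨i, rfl⟩
  have hdvd : ∀ i j, (X : K[X]) ^ d j ∣ (P * F) i j := by
    intro i j
    rw [hPF]
    exact hrow i j
  refine ⟨?_, hdvd, ?_⟩
  · -- determinant is a monomial
    set D := Finset.univ.sup d with hD
    have hmem : ∀ i : Fin m,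
        (fun j' => if i = j' then (X : K[X]) ^ D else 0) ∈ approxModule d F := by
      intro i j
      have heq : Matrix.vecMul (fun j' => if i = j' then (X : K[X]) ^ D else 0) F j
          = X ^ D * F i j := by
        simp [Matrix.vecMul, dotProduct, ite_mul, Finset.sum_ite_eq]
      rw [heq]
      exact Dvd.dvd.mul_right (pow_dvd_pow X (Finset.le_sup (Finset.mem_univ j))) _
    have hQ : ∀ i : Fin m, ∃ q : Fin m → K[X],
        (q ᵥ* P) = fun j' => if i = j' then (X : K[X]) ^ D else 0 := by
      intro i
      have h := hmem i
      rw [← hspan] at h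
      obtain ⟨q, hq⟩ := (Submodule.mem_span_range_iff_exists_fun _).mp h
      exact ⟨q, by rw [vecMul_eq_sum_smul]; exact hq⟩
    choose Q hQ using hQ
    have hQP : Matrix.of Q * P = (X : K[X]) ^ D • (1 : Matrix (Fin m) (Fin m) K[X]) := by
      ext i j
      have := congrFun (hQ i) j
      simp only [vecMul_apply] at this
      simp [Matrix.mul_apply, Matrix.smul_apply, Matrix.one_apply, mul_ite, this]
    have hdetdvd : P.det ∣ (X : K[X]) ^ (D * m) := by
      have hd := congrArg Matrix.det hQP
      rw [Matrix.det_mul, Matrix.det_smul, Matrix.det_one, mul_one, Fintype.card_fin,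
        ← pow_mul] at hd
      exact Dvd.intro_left _ hd
    obtain ⟨δ, _, hassoc⟩ := (dvd_prime_pow Polynomial.prime_X _).mp hdetdvd
    obtain ⟨u, hu⟩ := hassoc
    obtain ⟨r, hru, hCr⟩ := Polynomial.isUnit_iff.mp (u⁻¹ : K[X]ˣ).isUnit
    refine ⟨r, hru.ne_zero, δ, ?_⟩
    have hdet : P.det = X ^ δ * (↑u⁻¹ : K[X]) := by
      calc P.det = P.det * (↑u * (↑u⁻¹ : K[X])) := by rw [Units.mul_inv, mul_one]
        _ = (P.det * ↑u) * ↑u⁻¹ := by ring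
        _ = X ^ δ * ↑u⁻¹ := by rw [hu]
    rw [hdet, ← hCr, mul_comm]
  · -- rank condition
    rw [rank_eq_card_rows_iff]
    intro v hv
    rw [Matrix.vecMul_fromCols] at hv
    have hv1 : v ᵥ* P.map (Polynomial.eval 0) = 0 := by
      ext j; exact congrFun hv (Sum.inl j)
    have hv2 : v ᵥ* (Matrix.of fun i j => ((P * F) i j).coeff (d j)) = 0 := by
      ext j; exact congrFun hv (Sum.inr j)
    set vv : Fin m → K[X] := fun i => Polynomial.C (v i) with hvv
    set w : Fin m → K[X] := vv ᵥ* P with hw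
    have hw0 : ∀ j, (w j).coeff 0 = 0 := by
      intro j
      rw [Polynomial.coeff_zero_eq_eval_zero, hw, eval0_vecMul]
      have : (fun i => (vv i).eval 0) = v := by funext i; simp [hvv]
      rw [this]
      exact congrFun hv1 j
    have hwr : ∀ j, ∃ r, w j = X * r := fun j => Polynomial.X_dvd_iff.mpr (hw0 j)
    choose r hr using hwr
    have hrA : r ∈ approxModule d F := by
      intro j
      have hwF : (w ᵥ* F) j = X * Matrix.vecMul r F j := by
        simp only [vecMul_apply]
        rw [Finset.mul_sum]
        exact Finset.sum_congr rfl fun i _ => by rw [hr i, mul_assoc]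
      have hwPF : (w ᵥ* F) j = ∑ i, Polynomial.C (v i) * (P * F) i j := by
        rw [hw, Matrix.vecMul_vecMul]
        rfl
      have hdd : (X : K[X]) ^ (d j + 1) ∣ (w ᵥ* F) j := by
        rw [Polynomial.X_pow_dvd_iff]
        intro t ht
        rcases Nat.lt_succ_iff_lt_or_eq.mp ht with h | h
        · rw [hwPF, Polynomial.finset_sum_coeff]
          refine Finset.sum_eq_zero fun i _ => ?_
          exact Polynomial.X_pow_dvd_iff.mp ((hdvd i j).mul_left _) t h
        · subst h
          rw [hwPF, Polynomial.finset_sum_coeff]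
          have heq : ∀ i ∈ Finset.univ, (Polynomial.C (v i) * (P * F) i j).coeff (d j)
              = v i * ((P * F) i j).coeff (d j) := by
            intro i _
            rw [coeff_mul_of_dvd (hdvd i j), Polynomial.coeff_C_zero]
          rw [Finset.sum_congr rfl heq]
          exact congrFun hv2 j
      rw [hwF] at hdd
      obtain ⟨g, hg⟩ := hdd
      refine ⟨g, mul_left_cancel₀ (Polynomial.X_ne_zero (R := K)) ?_⟩
      rw [hg]
      ring
    rw [← hspan] at hrA
    obtain ⟨uu, huu⟩ := (Submodule.mem_span_range_iff_exists_fun _).mp hrA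
    have huu' : uu ᵥ* P = r := by rw [vecMul_eq_sum_smul]; exact huu
    have hzero : (vv - (X : K[X]) • uu) ᵥ* P = 0 := by
      rw [Matrix.sub_vecMul, Matrix.smul_vecMul, huu', ← hw]
      funext j
      simp only [Pi.sub_apply, Pi.smul_apply, smul_eq_mul, Pi.zero_apply]
      rw [hr j, sub_self]
    have hind := Fintype.linearIndependent_iff.mp hli (vv - (X : K[X]) • uu)
      (by rw [← vecMul_eq_sum_smul]; exact hzero)
    funext i
    have hi := hind i
    simp only [Pi.sub_apply, Pi.smul_apply, smul_eq_mul, hvv, sub_eq_zero] at hi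
    have := congrArg (fun p => Polynomial.coeff p 0) hi
    simpa using this

end SMinimalAux

/-- Characterization of `s`-minimal approximant bases. -/
theorem sMinimal_basis_characterization
    {K : Type*} [Field K] {m n : ℕ} (d : Fin n → ℕ) (hd : ∀ j, 0 < d j)
    (F : Matrix (Fin m) (Fin n) K[X])
    (hF : ∀ i j, (F i j).degree < (d j : ℕ∞))
    (s : Fin m → ℤ) (P : Matrix (Fin m) (Fin m) K[X]) :
    (rowsBasis P (approxModule d F) ∧ sReduced s P) ↔
      (sReduced s P ∧
       (∃ c : K, c ≠ 0 ∧ ∃ δ : ℕ, P.det = Polynomial.C c * X ^ δ) ∧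
       (∀ i j, (X : K[X]) ^ d j ∣ (P * F) i j) ∧
       (Matrix.fromCols (P.map (Polynomial.eval 0))
          (Matrix.of fun i j => ((P * F) i j).coeff (d j))).rank = m) := by
  constructor
  · rintro ⟨hB, hred⟩
    obtain ⟨h1, h2, h3⟩ := SMinimalAux.conditions_of_rowsBasis hB
    exact ⟨hred, h1, h2, h3⟩
  · rintro ⟨hred, h1, h2, h3⟩
    exact ⟨SMinimalAux.rowsBasis_of_conditions h1 h2 h3, hred⟩
end
end

section
/- Let d ∈ (Z_{>0})^n and F ∈ K[x]^{m×n} with column degrees < d. Let P ∈ K[x]^{m×m} be nonsingular but not a basis of A_d(F), while its rows lie in A_d(F) and det(P) is a nonzero monomial. Then, writing P = U·A for a basis A of A_d(F) and U ∈ K[x]^{m×m}, the matrix U(0) is singular, and consequently the constant matrix [P(0) C] has rank < m, where C is the constant coefficient of P·F·diag(x^{−d_1},...,x^{−d_n}). -/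
open Polynomial Matrix

noncomputable section

section aux

open Polynomial Matrix

variable {K : Type*} [Field K] {m n : ℕ}

lemma aux_span_rows (M : Matrix (Fin m) (Fin m) K[X]) :
    Submodule.span K[X] (Set.range fun i => M i) = LinearMap.range M.vecMulLinear :=
  (range_vecMulLinear M).symm

lemma aux_basis_of_unit (U A : Matrix (Fin m) (Fin m) K[X])
    (N : Submodule K[X] (Fin m → K[X])) (hA : rowsBasis A N) (hu : IsUnit U) :
    rowsBasis (U * A) N := by
  obtain ⟨Uu, rfl⟩ := hu
  have hVU : (↑Uu⁻¹ : Matrix (Fin m) (Fin m) K[X]) * Uu = 1 := by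
    rw [← Units.val_mul, inv_mul_cancel, Units.val_one]
  have hUinj : Function.Injective (Uu : Matrix (Fin m) (Fin m) K[X]).vecMul := by
    intro x y hxy
    have := congrArg (fun v => Matrix.vecMul v (↑Uu⁻¹ : Matrix (Fin m) (Fin m) K[X])) hxy
    simpa [Matrix.vecMul_vecMul, ← Units.val_mul, mul_inv_cancel, Matrix.vecMul_one] using this
  have hUsurj : Function.Surjective (Uu : Matrix (Fin m) (Fin m) K[X]).vecMulLinear := by
    intro v
    exact ⟨Matrix.vecMul v (↑Uu⁻¹ : Matrix (Fin m) (Fin m) K[X]), by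
      simp [Matrix.vecMulLinear_apply, Matrix.vecMul_vecMul, hVU]⟩
  have hAinj : Function.Injective A.vecMul := Matrix.vecMul_injective_iff.2 hA.1
  constructor
  · refine Matrix.vecMul_injective_iff.1 ?_
    intro x y hxy
    apply hUinj
    apply hAinj
    simpa [← Matrix.vecMul_vecMul] using hxy
  · have hcomp : (Uu * A : Matrix (Fin m) (Fin m) K[X]).vecMulLinear
        = A.vecMulLinear.comp (Uu : Matrix (Fin m) (Fin m) K[X]).vecMulLinear := by
      refine LinearMap.ext fun v => ?_
      simp [Matrix.vecMulLinear_apply, Matrix.vecMul_vecMul]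
    rw [aux_span_rows, hcomp, LinearMap.range_comp_of_range_eq_top _
      (LinearMap.range_eq_top.mpr hUsurj), ← aux_span_rows]
    exact hA.2

end aux

/-- If `P` is nonsingular, has its rows in `A_d(F)`, has monomial determinant, but is
not a basis of `A_d(F)`, then for any factorization `P = U·A` through a basis `A`, the
constant matrix `U(0)` is singular and `[P(0) C]` has rank `< m`. -/
theorem not_basis_rank_deficient
    {K : Type*} [Field K] {m n : ℕ} (d : Fin n → ℕ) (hd : ∀ j, 0 < d j)
    (F : Matrix (Fin m) (Fin n) K[X])
    (hF : ∀ i j, (F i j).degree < (d j : ℕ∞))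
    (P : Matrix (Fin m) (Fin m) K[X])
    (hPdet : P.det ≠ 0)
    (hrows : ∀ i, P i ∈ approxModule d F)
    (hmono : ∃ c : K, c ≠ 0 ∧ ∃ δ : ℕ, P.det = Polynomial.C c * X ^ δ)
    (hnotbasis : ¬ rowsBasis P (approxModule d F))
    (A : Matrix (Fin m) (Fin m) K[X]) (hA : rowsBasis A (approxModule d F))
    (U : Matrix (Fin m) (Fin m) K[X]) (hU : P = U * A) :
    (U.map (Polynomial.eval 0)).det = 0 ∧
      (Matrix.fromCols (P.map (Polynomial.eval 0))
        (Matrix.of fun i j => ((P * F) i j).coeff (d j))).rank < m := by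
  classical
  obtain ⟨c, hc, δ, hPdetEq⟩ := hmono
  have hdetmul : P.det = U.det * A.det := by rw [hU, Matrix.det_mul]
  have hnotunit : ¬ IsUnit U.det := fun hu =>
    hnotbasis (hU ▸ aux_basis_of_unit U A _ hA ((Matrix.isUnit_iff_isUnit_det U).2 hu))
  have hdvd : U.det ∣ (X : K[X]) ^ δ := by
    have h1 : U.det ∣ Polynomial.C c * X ^ δ := ⟨A.det, by rw [← hPdetEq, hdetmul]⟩
    have h2 : (Polynomial.C c * X ^ δ : K[X]) ∣ X ^ δ :=
      ⟨Polynomial.C c⁻¹, by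
        rw [mul_right_comm, ← Polynomial.C_mul, mul_inv_cancel₀ hc, Polynomial.C_1, one_mul]⟩
    exact h1.trans h2
  obtain ⟨i, hile, hassoc⟩ := (dvd_prime_pow Polynomial.prime_X δ).1 hdvd
  have hipos : 0 < i := by
    rcases Nat.eq_zero_or_pos i with h0 | h
    · exact absurd (associated_one_iff_isUnit.1 (by simpa [h0] using hassoc)) hnotunit
    · exact h
  obtain ⟨u, hu⟩ := hassoc
  have heval0 : Polynomial.eval 0 U.det = 0 := by
    have h := congrArg (Polynomial.eval 0) hu
    simp only [Polynomial.eval_mul, Polynomial.eval_pow, Polynomial.eval_X,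
      zero_pow hipos.ne'] at h
    rcases mul_eq_zero.1 h with h' | h'
    · exact h'
    · exfalso
      obtain ⟨r, hr, hrc⟩ := Polynomial.isUnit_iff.1 u.isUnit
      rw [← hrc, Polynomial.eval_C] at h'
      exact hr.ne_zero h'
  have hdet0 : (U.map (Polynomial.eval 0)).det = 0 := by
    have := (RingHom.map_det (Polynomial.evalRingHom (0 : K)) U).symm
    simpa [heval0] using this
  refine ⟨hdet0, ?_⟩
  have hArows : ∀ i, A i ∈ approxModule d F := fun i =>
    hA.2 ▸ Submodule.subset_span (Set.mem_range_self i)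
  choose H hH using fun i j => hArows i j
  have hAF : ∀ k j, (A * F) k j = X ^ d j * H k j := by
    intro k j
    rw [← hH k j]
    simp [Matrix.mul_apply, Matrix.vecMul, dotProduct]
  have hPF : ∀ i j, (P * F) i j = X ^ d j * (∑ k, U i k * H k j) := by
    intro i j
    have h1 : (P * F) i j = ∑ k, U i k * ((A * F) k j) := by
      rw [hU, Matrix.mul_assoc, Matrix.mul_apply]
    rw [h1]
    simp_rw [hAF]
    rw [Finset.mul_sum]
    exact Finset.sum_congr rfl fun k _ => by ring
  have hC : (Matrix.of fun i j => ((P * F) i j).coeff (d j))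
      = (U.map (Polynomial.eval 0)) * (Matrix.of fun i j => Polynomial.eval 0 (H i j)) := by
    ext i j
    rw [Matrix.mul_apply, Matrix.of_apply, hPF i j]
    have h2 : ((X : K[X]) ^ d j * (∑ k, U i k * H k j)).coeff (d j)
        = (∑ k, U i k * H k j).coeff 0 := by
      simpa using Polynomial.coeff_X_pow_mul (∑ k, U i k * H k j) (d j) 0
    rw [h2, Polynomial.coeff_zero_eq_eval_zero, Polynomial.eval_finset_sum]
    simp [Matrix.map_apply]
  have hP0 : P.map (Polynomial.eval 0)
      = (U.map (Polynomial.eval 0)) * (A.map (Polynomial.eval 0)) := by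
    ext i j
    rw [hU]
    simp [Matrix.mul_apply, Matrix.map_apply, Polynomial.eval_finset_sum]
  have hfact : Matrix.fromCols (P.map (Polynomial.eval 0))
      (Matrix.of fun i j => ((P * F) i j).coeff (d j))
      = (U.map (Polynomial.eval 0)) * Matrix.fromCols (A.map (Polynomial.eval 0))
          (Matrix.of fun i j => Polynomial.eval 0 (H i j)) := by
    rw [Matrix.mul_fromCols, ← hP0, ← hC]
  rw [hfact]
  have hranklt : (U.map (Polynomial.eval 0)).rank < m := by
    rcases lt_or_eq_of_le ((U.map (Polynomial.eval 0)).rank_le_card_width.trans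
      (Fintype.card_fin m).le) with h | h
    · exact h
    · exfalso
      have htop : LinearMap.range (U.map (Polynomial.eval 0)).mulVecLin = ⊤ := by
        apply Submodule.eq_top_of_finrank_eq
        rw [show Module.finrank K (Fin m → K) = m by simp]
        exact h
      have hsurj : Function.Surjective (U.map (Polynomial.eval 0)).mulVec := by
        intro v
        obtain ⟨w, hw⟩ := LinearMap.range_eq_top.1 htop v
        exact ⟨w, hw⟩
      have hunit := (Matrix.isUnit_iff_isUnit_det _).1
        (Matrix.mulVec_surjective_iff_isUnit.1 hsurj)
      rw [hdet0] at hunit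
      simp at hunit
  exact lt_of_le_of_lt (Matrix.rank_mul_le_left _ _) hranklt
end
end
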